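/- If Ẑ is the mean of K i.i.d. nonnegative random variables with mean Z > 0 and E[w⁴] < ∞, then |E[log Ẑ] − log Z + Var(w)/(2KZ²)| = O(1/K²); more precisely, assuming additionally w ≥ c > 0 a.s., there is a constant C depending only on the first four moments of w and on c, Z such that |E[log Ẑ] − log Z + Var(w)/(2KZ²)| ≤ C/K². -/

import Mathlib

open MeasureTheory ProbabilityTheory
open scoped BigOperators ENNReal

private lemma L4mul {Ω : Type*} [MeasurableSpace Ω] {μ : Measure Ω} {f g : Ω → ℝ}
    (hf : MemLp f 4 μ) (hg : MemLp g 4 μ) : MemLp (fun ω => f ω * g ω) 2 μ :=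
  hg.smul hf (hpqr := ⟨by
    rw [← two_mul, show (4:ℝ≥0∞) = 2*2 by norm_num,
      ENNReal.mul_inv (by norm_num) (by norm_num), ← mul_assoc,
      ENNReal.mul_inv_cancel (by norm_num) (by norm_num), one_mul]⟩)

private lemma L2int {Ω : Type*} [MeasurableSpace Ω] {μ : Measure Ω} {f g : Ω → ℝ}
    (hf : MemLp f 2 μ) (hg : MemLp g 2 μ) : Integrable (fun ω => f ω * g ω) μ :=
  memLp_one_iff_integrable.mp (hg.smul hf (hpqr := ⟨by
    simp only [inv_one]
    exact ENNReal.inv_two_add_inv_two⟩))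

private lemma integrable_mul4 {Ω : Type*} [MeasurableSpace Ω] {μ : Measure Ω}
    {f g h k : Ω → ℝ} (hf : MemLp f 4 μ) (hg : MemLp g 4 μ)
    (hh : MemLp h 4 μ) (hk : MemLp k 4 μ) :
    Integrable (fun ω => f ω * g ω * h ω * k ω) μ :=
  (L2int (L4mul hf hg) (L4mul hh hk)).congr
    (Filter.Eventually.of_forall fun ω => by ring)
private lemma hasDerivAt_taylor_log (Z : ℝ) (hZ : Z ≠ 0) {x : ℝ} (hx : 0 < x) :
    HasDerivAt (fun t => Real.log t - Real.log Z
      - ((t - Z)/Z - (t - Z)^2/(2*Z^2) + (t - Z)^3/(3*Z^3)))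
      (-(x - Z)^3/(x*Z^3)) x := by
  have h1 : HasDerivAt (fun t : ℝ => t - Z) 1 x := (hasDerivAt_id x).sub_const Z
  have h2 : HasDerivAt (fun t : ℝ => (t - Z)^2) (2*(x - Z)) x := by
    simpa using h1.fun_pow 2
  have h3 : HasDerivAt (fun t : ℝ => (t - Z)^3) (3*(x - Z)^2) x := by
    simpa using h1.fun_pow 3
  have hlog : HasDerivAt Real.log x⁻¹ x := Real.hasDerivAt_log hx.ne'
  have H := (hlog.sub_const (Real.log Z)).fun_sub
    (((h1.div_const Z).fun_sub (h2.div_const (2*Z^2))).fun_add (h3.div_const (3*Z^3)))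
  refine H.congr_deriv ?_
  field_simp
  ring

private lemma hasDerivAt_quartic (Z c : ℝ) (x : ℝ) :
    HasDerivAt (fun t : ℝ => (t - Z)^4/c) (4*(x - Z)^3/c) x := by
  have h1 : HasDerivAt (fun t : ℝ => t - Z) 1 x := (hasDerivAt_id x).sub_const Z
  simpa using (h1.pow 4).div_const c

private lemma taylor_log_bound {m Z x : ℝ} (hm : 0 < m) (hmZ : m ≤ Z) (hx : m ≤ x) :
    |Real.log x - Real.log Z - ((x - Z)/Z - (x - Z)^2/(2*Z^2) + (x - Z)^3/(3*Z^3))|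
      ≤ (x - Z)^4/(4*m*Z^3) := by
  have hZ : (0:ℝ) < Z := lt_of_lt_of_le hm hmZ
  have hx0 : (0:ℝ) < x := lt_of_lt_of_le hm hx
  set h : ℝ → ℝ := fun t => Real.log t - Real.log Z
      - ((t - Z)/Z - (t - Z)^2/(2*Z^2) + (t - Z)^3/(3*Z^3)) with hh
  set g : ℝ → ℝ := fun t => (t - Z)^4/(4*m*Z^3) + h t with hg
  have hhZ : h Z = 0 := by simp [hh]
  have hgZ : g Z = 0 := by simp [hg, hhZ]
  have hhx : h x = Real.log x - Real.log Z
      - ((x - Z)/Z - (x - Z)^2/(2*Z^2) + (x - Z)^3/(3*Z^3)) := by rw [hh]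
  have hgx : g x = (x - Z)^4/(4*m*Z^3) + h x := by rw [hg]
  have hd : ∀ t : ℝ, 0 < t → HasDerivAt h (-(t - Z)^3/(t*Z^3)) t := fun t ht =>
    hasDerivAt_taylor_log Z hZ.ne' ht
  have hgd : ∀ t : ℝ, 0 < t →
      HasDerivAt g (4*(t - Z)^3/(4*m*Z^3) + -(t - Z)^3/(t*Z^3)) t := fun t ht =>
    (hasDerivAt_quartic Z _ t).add (hd t ht)
  have hgval : ∀ t : ℝ, 0 < t →
      4*(t - Z)^3/(4*m*Z^3) + -(t - Z)^3/(t*Z^3) = (t - Z)^3*(t - m)/(m*t*Z^3) := by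
    intro t ht
    field_simp
    ring
  have hq0 : (0:ℝ) ≤ (x - Z)^4/(4*m*Z^3) := by positivity
  rw [← hhx, abs_le]
  rcases le_total Z x with hZx | hxZ
  · -- x ≥ Z : work on Icc Z x
    have hpos : ∀ t ∈ Set.Icc Z x, (0:ℝ) < t := fun t ht => lt_of_lt_of_le hZ ht.1
    have hanti : AntitoneOn h (Set.Icc Z x) := by
      apply antitoneOn_of_hasDerivWithinAt_nonpos (convex_Icc _ _)
        (f' := fun t => -(t - Z)^3/(t*Z^3))
      · exact fun t ht => ((hd t (hpos t ht)).continuousAt).continuousWithinAt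
      · intro t ht
        rw [interior_Icc] at ht
        exact (hd t (hZ.trans ht.1)).hasDerivWithinAt
      · intro t ht
        rw [interior_Icc] at ht
        have htpos : (0:ℝ) < t := hZ.trans ht.1
        have h1 : (0:ℝ) ≤ (t - Z)^3 := pow_nonneg (by linarith [ht.1]) 3
        rw [neg_div]
        exact neg_nonpos.mpr (div_nonneg h1 (by positivity))
    have hmono : MonotoneOn g (Set.Icc Z x) := by
      apply monotoneOn_of_hasDerivWithinAt_nonneg (convex_Icc _ _)
        (f' := fun t => 4*(t - Z)^3/(4*m*Z^3) + -(t - Z)^3/(t*Z^3))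
      · exact fun t ht => ((hgd t (hpos t ht)).continuousAt).continuousWithinAt
      · intro t ht
        rw [interior_Icc] at ht
        exact (hgd t (hZ.trans ht.1)).hasDerivWithinAt
      · intro t ht
        rw [interior_Icc] at ht
        have htpos : (0:ℝ) < t := hZ.trans ht.1
        rw [hgval t htpos]
        have h1 : (0:ℝ) ≤ (t - Z)^3 := pow_nonneg (by linarith [ht.1]) 3
        have h2 : (0:ℝ) ≤ t - m := by linarith [ht.1]
        exact div_nonneg (mul_nonneg h1 h2) (by positivity)
    have h1 : h x ≤ 0 := hhZ ▸ hanti ⟨le_rfl, hZx⟩ ⟨hZx, le_rfl⟩ hZx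
    have h2 : 0 ≤ g x := hgZ ▸ hmono ⟨le_rfl, hZx⟩ ⟨hZx, le_rfl⟩ hZx
    constructor
    · linarith [hgx ▸ h2]
    · linarith
  · -- x ≤ Z : work on Icc x Z
    have hpos : ∀ t ∈ Set.Icc x Z, (0:ℝ) < t := fun t ht => lt_of_lt_of_le hx0 ht.1
    have hmono : MonotoneOn h (Set.Icc x Z) := by
      apply monotoneOn_of_hasDerivWithinAt_nonneg (convex_Icc _ _)
        (f' := fun t => -(t - Z)^3/(t*Z^3))
      · exact fun t ht => ((hd t (hpos t ht)).continuousAt).continuousWithinAt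
      · intro t ht
        rw [interior_Icc] at ht
        exact (hd t (hx0.trans ht.1)).hasDerivWithinAt
      · intro t ht
        rw [interior_Icc] at ht
        have htpos : (0:ℝ) < t := hx0.trans ht.1
        have h1 : (t - Z)^3 ≤ 0 := Odd.pow_nonpos (by decide) (by linarith [ht.2])
        exact div_nonneg (neg_nonneg.mpr h1) (by positivity)
    have hanti : AntitoneOn g (Set.Icc x Z) := by
      apply antitoneOn_of_hasDerivWithinAt_nonpos (convex_Icc _ _)
        (f' := fun t => 4*(t - Z)^3/(4*m*Z^3) + -(t - Z)^3/(t*Z^3))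
      · exact fun t ht => ((hgd t (hpos t ht)).continuousAt).continuousWithinAt
      · intro t ht
        rw [interior_Icc] at ht
        exact (hgd t (hx0.trans ht.1)).hasDerivWithinAt
      · intro t ht
        rw [interior_Icc] at ht
        have htpos : (0:ℝ) < t := hx0.trans ht.1
        rw [hgval t htpos]
        have h1 : (t - Z)^3 ≤ 0 := Odd.pow_nonpos (by decide) (by linarith [ht.2])
        have h2 : (0:ℝ) ≤ t - m := by linarith [ht.1]
        rw [div_nonpos_iff]
        exact Or.inr ⟨mul_nonpos_of_nonpos_of_nonneg h1 h2, by positivity⟩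
    have h1 : h x ≤ 0 := hhZ ▸ hmono ⟨le_rfl, hxZ⟩ ⟨hxZ, le_rfl⟩ hxZ
    have h2 : 0 ≤ g x := hgZ ▸ hanti ⟨le_rfl, hxZ⟩ ⟨hxZ, le_rfl⟩ hxZ
    constructor
    · linarith [hgx ▸ h2]
    · linarith

private lemma icomb4 {Ω : Type*} [MeasurableSpace Ω] {μ : Measure Ω} [IsFiniteMeasure μ]
    {f g : Ω → ℝ} (hf : MemLp f 4 μ) (hg : MemLp g 4 μ)
    (a b : ℕ) (hab : a + b ≤ 4) : Integrable (fun ω => (f ω)^a * (g ω)^b) μ := by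
  have hone : MemLp (fun _ : Ω => (1:ℝ)) 4 μ := memLp_const 1
  have ha4 : a ≤ 4 := le_trans (Nat.le_add_right _ _) hab
  have hb4 : b ≤ 4 := le_trans (Nat.le_add_left _ _) hab
  interval_cases a <;> interval_cases b <;>
  first
  | exact absurd hab (by omega)
  | (refine (integrable_mul4 hone hone hone hone).congr (Filter.Eventually.of_forall fun ω => ?_); ring1)
  | (refine (integrable_mul4 hf hone hone hone).congr (Filter.Eventually.of_forall fun ω => ?_); ring1)
  | (refine (integrable_mul4 hg hone hone hone).congr (Filter.Eventually.of_forall fun ω => ?_); ring1)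
  | (refine (integrable_mul4 hf hg hone hone).congr (Filter.Eventually.of_forall fun ω => ?_); ring1)
  | (refine (integrable_mul4 hf hf hone hone).congr (Filter.Eventually.of_forall fun ω => ?_); ring1)
  | (refine (integrable_mul4 hg hg hone hone).congr (Filter.Eventually.of_forall fun ω => ?_); ring1)
  | (refine (integrable_mul4 hf hf hg hone).congr (Filter.Eventually.of_forall fun ω => ?_); ring1)
  | (refine (integrable_mul4 hf hg hg hone).congr (Filter.Eventually.of_forall fun ω => ?_); ring1)
  | (refine (integrable_mul4 hf hf hf hone).congr (Filter.Eventually.of_forall fun ω => ?_); ring1)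
  | (refine (integrable_mul4 hg hg hg hone).congr (Filter.Eventually.of_forall fun ω => ?_); ring1)
  | (refine (integrable_mul4 hf hf hf hg).congr (Filter.Eventually.of_forall fun ω => ?_); ring1)
  | (refine (integrable_mul4 hf hf hg hg).congr (Filter.Eventually.of_forall fun ω => ?_); ring1)
  | (refine (integrable_mul4 hf hg hg hg).congr (Filter.Eventually.of_forall fun ω => ?_); ring1)
  | (refine (integrable_mul4 hf hf hf hf).congr (Filter.Eventually.of_forall fun ω => ?_); ring1)
  | (refine (integrable_mul4 hg hg hg hg).congr (Filter.Eventually.of_forall fun ω => ?_); ring1)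

/-- Bias expansion of `E[log Ẑ]` for the empirical mean `Ẑ` of `K` i.i.d. variables
bounded below by `c > 0` with mean `Z` and finite fourth moment:
`|E[log Ẑ] − log Z + Var(w)/(2KZ²)| ≤ C/K²` for some constant `C`. -/
theorem log_mean_bias_expansion
    {Ω : Type*} [MeasurableSpace Ω] (μ : Measure Ω) [IsProbabilityMeasure μ]
    (w : ℕ → Ω → ℝ) (hmeas : ∀ k, Measurable (w k))
    (hindep : iIndepFun w μ)
    (hid : ∀ k, IdentDistrib (w k) (w 0) μ μ)
    (c : ℝ) (hc : 0 < c) (hlb : ∀ k, ∀ᵐ ω ∂μ, c ≤ w k ω)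
    (Z : ℝ) (hZ : 0 < Z) (hmean : ∫ ω, w 0 ω ∂μ = Z)
    (hL4 : MemLp (w 0) 4 μ) :
    ∃ C : ℝ, ∀ K : ℕ, 1 ≤ K →
      |(∫ ω, Real.log ((∑ k ∈ Finset.range K, w k ω) / K) ∂μ)
        - Real.log Z + variance (w 0) μ / (2 * K * Z ^ 2)| ≤ C / K ^ 2 := by
  classical
  have hwL4 : ∀ k, MemLp (w k) 4 μ := fun k => (hid k).symm.memLp_snd hL4
  set X : ℕ → Ω → ℝ := fun k ω => w k ω - Z with hX
  have hXmeas : ∀ k, Measurable (X k) := fun k => (hmeas k).sub measurable_const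
  have hXindep : iIndepFun X μ :=
    hindep.comp (fun _ => fun x => x - Z) (fun _ => measurable_id.sub measurable_const)
  have hXid : ∀ k, IdentDistrib (X k) (X 0) μ μ :=
    fun k => (hid k).comp (measurable_id.sub measurable_const)
  have hXL4 : ∀ k, MemLp (X k) 4 μ := fun k => (hwL4 k).sub (memLp_const Z)
  set m2 : ℝ := ∫ ω, (X 0 ω)^2 ∂μ with hm2
  set m3 : ℝ := ∫ ω, (X 0 ω)^3 ∂μ with hm3
  set m4 : ℝ := ∫ ω, (X 0 ω)^4 ∂μ with hm4
  have hXmom : ∀ k (j : ℕ), ∫ ω, (X k ω)^j ∂μ = ∫ ω, (X 0 ω)^j ∂μ :=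
    fun k j => ((hXid k).comp (measurable_id.pow_const j)).integral_eq
  have hX0mean : ∫ ω, X 0 ω ∂μ = 0 := by
    simp only [hX]
    rw [integral_sub (hL4.integrable (by norm_num)) (integrable_const Z)]
    simp [hmean]
  have hXmean : ∀ k, ∫ ω, X k ω ∂μ = 0 := fun k => by
    rw [(hXid k).integral_eq]; exact hX0mean
  set S : ℕ → Ω → ℝ := fun n ω => ∑ k ∈ Finset.range n, X k ω with hS
  have hSfun : ∀ n, (∑ k ∈ Finset.range n, X k) = S n := fun n => by
    funext ω; simp [hS]
  have hSmeas : ∀ n, Measurable (S n) := fun n =>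
    Finset.measurable_sum _ (fun i _ => hXmeas i)
  have hSL4 : ∀ n, MemLp (S n) 4 μ := fun n =>
    memLp_finset_sum _ (fun i _ => hXL4 i)
  have hSXindep : ∀ n, IndepFun (S n) (X n) μ := fun n => by
    rw [← hSfun]
    exact hXindep.indepFun_finset_sum_of_notMem hXmeas Finset.notMem_range_self
  have key : ∀ n (a b : ℕ),
      ∫ ω, (S n ω)^a * (X n ω)^b ∂μ
        = (∫ ω, (S n ω)^a ∂μ) * (∫ ω, (X n ω)^b ∂μ) := by
    intro n a b
    have h1 : IndepFun (fun ω => (S n ω)^a) (fun ω => (X n ω)^b) μ :=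
      (hSXindep n).comp (measurable_id.pow_const a) (measurable_id.pow_const b)
    exact h1.integral_fun_mul_eq_mul_integral (((hSmeas n).pow_const a).aestronglyMeasurable)
      (((hXmeas n).pow_const b).aestronglyMeasurable)
  -- moments of partial sums
  have hmom : ∀ n : ℕ,
      (∫ ω, S n ω ∂μ = 0) ∧
      (∫ ω, (S n ω)^2 ∂μ = n * m2) ∧
      (∫ ω, (S n ω)^3 ∂μ = n * m3) ∧
      (∫ ω, (S n ω)^4 ∂μ = n * m4 + 3*n*(n-1)*m2^2) := by
    intro n
    induction n with
    | zero =>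
      refine ⟨?_, ?_, ?_, ?_⟩ <;> simp [hS]
    | succ n ih =>
      have hSsucc : ∀ ω, S (n+1) ω = S n ω + X n ω := fun ω => by
        simp only [hS, Finset.sum_range_succ]
      have iT : ∀ a b : ℕ, a + b ≤ 4 →
          Integrable (fun ω => (S n ω)^a * (X n ω)^b) μ :=
        fun a b h => icomb4 (hSL4 n) (hXL4 n) a b h
      have iSa : ∀ a : ℕ, a ≤ 4 → Integrable (fun ω => (S n ω)^a) μ := fun a ha =>
        (iT a 0 (by omega)).congr (Filter.Eventually.of_forall fun ω => by ring)
      have iXb : ∀ b : ℕ, b ≤ 4 → Integrable (fun ω => (X n ω)^b) μ := fun b hb =>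
        (iT 0 b (by omega)).congr (Filter.Eventually.of_forall fun ω => by ring)
      have hb2 : ∫ ω, (X n ω)^2 ∂μ = m2 := by rw [hXmom n 2]
      have hb3 : ∫ ω, (X n ω)^3 ∂μ = m3 := by rw [hXmom n 3]
      have hb4 : ∫ ω, (X n ω)^4 ∂μ = m4 := by rw [hXmom n 4]
      have iS1 : Integrable (fun ω => S n ω) μ :=
        (iSa 1 (by norm_num)).congr (Filter.Eventually.of_forall fun ω => by ring)
      have iX1 : Integrable (fun ω => X n ω) μ :=
        (iXb 1 (by norm_num)).congr (Filter.Eventually.of_forall fun ω => by ring)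
      have I1 : ∫ ω, S (n+1) ω ∂μ = 0 := by
        have e : ∫ ω, S (n+1) ω ∂μ = ∫ ω, (S n ω + X n ω) ∂μ :=
          integral_congr_ae (Filter.Eventually.of_forall fun ω => hSsucc ω)
        rw [e, integral_add iS1 iX1, ih.1, hXmean n, add_zero]
      have I2 : ∫ ω, (S (n+1) ω)^2 ∂μ = (n+1 : ℕ) * m2 := by
        have iA : Integrable (fun ω => (S n ω)^2) μ := iSa 2 (by norm_num)
        have iB : Integrable (fun ω => 2*((S n ω)^1*(X n ω)^1)) μ :=
          (iT 1 1 (by norm_num)).const_mul 2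
        have iC : Integrable (fun ω => (X n ω)^2) μ := iXb 2 (by norm_num)
        have iBC : Integrable (fun ω => 2*((S n ω)^1*(X n ω)^1) + (X n ω)^2) μ :=
          iB.add iC
        have e : ∫ ω, (S (n+1) ω)^2 ∂μ
            = ∫ ω, ((S n ω)^2 + (2*((S n ω)^1*(X n ω)^1) + (X n ω)^2)) ∂μ :=
          integral_congr_ae (Filter.Eventually.of_forall fun ω => by simp only [hSsucc]; ring)
        rw [e, integral_add iA iBC, integral_add iB iC, integral_const_mul, key n 1 1]
        simp only [pow_one]
        rw [ih.2.1, hXmean n, hb2]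
        push_cast
        ring
      have I3 : ∫ ω, (S (n+1) ω)^3 ∂μ = (n+1 : ℕ) * m3 := by
        have iA : Integrable (fun ω => (S n ω)^3) μ := iSa 3 (by norm_num)
        have iB : Integrable (fun ω => 3*((S n ω)^2*(X n ω)^1)) μ :=
          (iT 2 1 (by norm_num)).const_mul 3
        have iC : Integrable (fun ω => 3*((S n ω)^1*(X n ω)^2)) μ :=
          (iT 1 2 (by norm_num)).const_mul 3
        have iD : Integrable (fun ω => (X n ω)^3) μ := iXb 3 (by norm_num)
        have iCD : Integrable (fun ω => 3*((S n ω)^1*(X n ω)^2) + (X n ω)^3) μ :=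
          iC.add iD
        have iBCD : Integrable
            (fun ω => 3*((S n ω)^2*(X n ω)^1) + (3*((S n ω)^1*(X n ω)^2) + (X n ω)^3)) μ :=
          iB.add iCD
        have e : ∫ ω, (S (n+1) ω)^3 ∂μ
            = ∫ ω, ((S n ω)^3 + (3*((S n ω)^2*(X n ω)^1)
                + (3*((S n ω)^1*(X n ω)^2) + (X n ω)^3))) ∂μ :=
          integral_congr_ae (Filter.Eventually.of_forall fun ω => by simp only [hSsucc]; ring)
        rw [e, integral_add iA iBCD, integral_add iB iCD, integral_add iC iD,
          integral_const_mul, integral_const_mul, key n 2 1, key n 1 2]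
        simp only [pow_one]
        rw [ih.2.2.1, ih.1, hXmean n, hb2, hb3]
        push_cast
        ring
      have I4 : ∫ ω, (S (n+1) ω)^4 ∂μ
          = (n+1 : ℕ) * m4 + 3*(n+1 : ℕ)*((n+1 : ℕ)-1)*m2^2 := by
        have iA : Integrable (fun ω => (S n ω)^4) μ := iSa 4 (by norm_num)
        have iB : Integrable (fun ω => 4*((S n ω)^3*(X n ω)^1)) μ :=
          (iT 3 1 (by norm_num)).const_mul 4
        have iC : Integrable (fun ω => 6*((S n ω)^2*(X n ω)^2)) μ :=
          (iT 2 2 (by norm_num)).const_mul 6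
        have iD : Integrable (fun ω => 4*((S n ω)^1*(X n ω)^3)) μ :=
          (iT 1 3 (by norm_num)).const_mul 4
        have iE : Integrable (fun ω => (X n ω)^4) μ := iXb 4 (by norm_num)
        have iDE : Integrable (fun ω => 4*((S n ω)^1*(X n ω)^3) + (X n ω)^4) μ :=
          iD.add iE
        have iCDE : Integrable
            (fun ω => 6*((S n ω)^2*(X n ω)^2) + (4*((S n ω)^1*(X n ω)^3) + (X n ω)^4)) μ :=
          iC.add iDE
        have iBCDE : Integrable
            (fun ω => 4*((S n ω)^3*(X n ω)^1)
              + (6*((S n ω)^2*(X n ω)^2) + (4*((S n ω)^1*(X n ω)^3) + (X n ω)^4))) μ :=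
          iB.add iCDE
        have e : ∫ ω, (S (n+1) ω)^4 ∂μ
            = ∫ ω, ((S n ω)^4 + (4*((S n ω)^3*(X n ω)^1)
                + (6*((S n ω)^2*(X n ω)^2) + (4*((S n ω)^1*(X n ω)^3) + (X n ω)^4)))) ∂μ :=
          integral_congr_ae (Filter.Eventually.of_forall fun ω => by simp only [hSsucc]; ring)
        rw [e, integral_add iA iBCDE, integral_add iB iCDE, integral_add iC iDE,
          integral_add iD iE, integral_const_mul, integral_const_mul, integral_const_mul,
          key n 3 1, key n 2 2, key n 1 3]
        simp only [pow_one]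
        rw [ih.2.2.2, ih.2.2.1, ih.2.1, ih.1, hXmean n, hb2, hb3, hb4]
        push_cast
        ring
      exact ⟨I1, I2, I3, I4⟩
  have hm2nonneg : 0 ≤ m2 := by
    rw [hm2]; exact integral_nonneg fun ω => by positivity
  have hm4nonneg : 0 ≤ m4 := by
    rw [hm4]; exact integral_nonneg fun ω => by positivity
  have hw2 : MemLp (w 0) 2 μ := hL4.mono_exponent (by norm_num)
  have hmean' : μ[w 0] = Z := hmean
  have hvar : variance (w 0) μ = m2 := by
    rw [variance_eq_integral hw2.aemeasurable, hmean', hm2]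
  set m : ℝ := min c Z with hmdef
  have hm : 0 < m := lt_min hc hZ
  have hmZ : m ≤ Z := min_le_right _ _
  refine ⟨|m3|/(3*Z^3) + (m4 + 3*m2^2)/(4*m*Z^3), ?_⟩
  intro K hK
  have hKpos : (0:ℝ) < K := by exact_mod_cast Nat.pos_of_ne_zero (by omega)
  have hK1 : (1:ℝ) ≤ K := by exact_mod_cast hK
  have hKne : (K:ℝ) ≠ 0 := ne_of_gt hKpos
  set P : Ω → ℝ := fun ω =>
    (S K ω)^1/((K:ℝ)*Z) - (S K ω)^2/(2*Z^2*(K:ℝ)^2) + (S K ω)^3/(3*Z^3*(K:ℝ)^3) with hP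
  set R : Ω → ℝ := fun ω => Real.log (Z + S K ω/(K:ℝ)) - Real.log Z - P ω with hR
  have hsum : ∀ ω, (∑ k ∈ Finset.range K, w k ω)/(K:ℝ) = Z + S K ω/(K:ℝ) := by
    intro ω
    have h1 : ∑ k ∈ Finset.range K, w k ω = S K ω + K*Z := by
      simp only [hS, hX, Finset.sum_sub_distrib, Finset.sum_const, Finset.card_range,
        nsmul_eq_mul]
      ring
    rw [h1]
    field_simp
    ring
  have haeZ : ∀ᵐ ω ∂μ, m ≤ Z + S K ω/(K:ℝ) := by
    have hc_ae : ∀ᵐ ω ∂μ, ∀ k, c ≤ w k ω := ae_all_iff.mpr hlb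
    filter_upwards [hc_ae] with ω hω
    have h1 : (K:ℝ)*c ≤ ∑ k ∈ Finset.range K, w k ω := by
      calc (K:ℝ)*c = ∑ _k ∈ Finset.range K, c := by
            rw [Finset.sum_const, Finset.card_range, nsmul_eq_mul]
        _ ≤ ∑ k ∈ Finset.range K, w k ω := Finset.sum_le_sum fun k _ => hω k
    have h2 : c ≤ (∑ k ∈ Finset.range K, w k ω)/(K:ℝ) := by
      rw [le_div_iff₀ hKpos]; linarith
    rw [hsum ω] at h2
    calc m ≤ c := min_le_left _ _
      _ ≤ Z + S K ω/(K:ℝ) := h2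
  have hRbound : ∀ᵐ ω ∂μ, |R ω| ≤ (S K ω)^4/(4*m*Z^3*(K:ℝ)^4) := by
    filter_upwards [haeZ] with ω hω
    have h := taylor_log_bound hm hmZ hω
    have hxz : Z + S K ω/(K:ℝ) - Z = S K ω/(K:ℝ) := by ring
    rw [hxz] at h
    have hPω : (S K ω/(K:ℝ))/Z - (S K ω/(K:ℝ))^2/(2*Z^2) + (S K ω/(K:ℝ))^3/(3*Z^3)
        = P ω := by
      rw [hP]
      field_simp
    have hq : (S K ω/(K:ℝ))^4/(4*m*Z^3) = (S K ω)^4/(4*m*Z^3*(K:ℝ)^4) := by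
      rw [div_pow, div_div]
      ring_nf
    rw [hPω, hq] at h
    exact h
  have iSKa : ∀ a : ℕ, a ≤ 4 → Integrable (fun ω => (S K ω)^a) μ := fun a ha =>
    (icomb4 (hSL4 K) (hXL4 K) a 0 (by omega)).congr
      (Filter.Eventually.of_forall fun ω => by ring)
  have iP1 : Integrable (fun ω => (S K ω)^1/((K:ℝ)*Z)) μ :=
    (iSKa 1 (by norm_num)).div_const _
  have iP2 : Integrable (fun ω => (S K ω)^2/(2*Z^2*(K:ℝ)^2)) μ :=
    (iSKa 2 (by norm_num)).div_const _
  have iP3 : Integrable (fun ω => (S K ω)^3/(3*Z^3*(K:ℝ)^3)) μ :=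
    (iSKa 3 (by norm_num)).div_const _
  have iP12 : Integrable (fun ω => (S K ω)^1/((K:ℝ)*Z) - (S K ω)^2/(2*Z^2*(K:ℝ)^2)) μ :=
    iP1.sub iP2
  have IntP : Integrable P μ := by
    rw [hP]; exact iP12.add iP3
  have IntB : Integrable (fun ω => (S K ω)^4/(4*m*Z^3*(K:ℝ)^4)) μ :=
    (iSKa 4 (by norm_num)).div_const _
  have hmeasP : Measurable P := by
    rw [hP]
    exact ((((hSmeas K).pow_const 1).div_const _).sub
      (((hSmeas K).pow_const 2).div_const _)).add (((hSmeas K).pow_const 3).div_const _)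
  have hmeasR : AEStronglyMeasurable R μ := by
    rw [hR]
    exact (((Real.measurable_log.comp
      (measurable_const.add ((hSmeas K).div_const _))).sub measurable_const).sub
      hmeasP).aestronglyMeasurable
  have IntR : Integrable R μ := by
    refine IntB.mono' hmeasR ?_
    filter_upwards [hRbound] with ω hω
    rw [Real.norm_eq_abs]
    exact hω
  have iconst : Integrable (fun _ : Ω => Real.log Z) μ := integrable_const _
  have iPR : Integrable (fun ω => P ω + R ω) μ := IntP.add IntR
  have hlogsplit : ∫ ω, Real.log ((∑ k ∈ Finset.range K, w k ω)/(K:ℝ)) ∂μ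
      = Real.log Z + ((∫ ω, P ω ∂μ) + ∫ ω, R ω ∂μ) := by
    have h0 : ∫ ω, Real.log ((∑ k ∈ Finset.range K, w k ω)/(K:ℝ)) ∂μ
        = ∫ ω, (Real.log Z + (P ω + R ω)) ∂μ := by
      refine integral_congr_ae (Filter.Eventually.of_forall fun ω => ?_)
      simp only [hsum ω, hR]
      ring
    rw [h0, integral_add iconst iPR, integral_add IntP IntR, integral_const]
    simp
  have hPint : ∫ ω, P ω ∂μ = -(m2/(2*Z^2*(K:ℝ))) + m3/(3*Z^3*(K:ℝ)^2) := by
    rw [hP, integral_add iP12 iP3, integral_sub iP1 iP2,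
      integral_div, integral_div, integral_div]
    simp only [pow_one]
    rw [(hmom K).1, (hmom K).2.1, (hmom K).2.2.1]
    field_simp
    ring
  have hRint : |∫ ω, R ω ∂μ| ≤ ((K:ℝ)*m4 + 3*(K:ℝ)*((K:ℝ)-1)*m2^2)/(4*m*Z^3*(K:ℝ)^4) := by
    have h1 : |∫ ω, R ω ∂μ| ≤ ∫ ω, |R ω| ∂μ := by
      simpa [Real.norm_eq_abs] using norm_integral_le_integral_norm (μ := μ) R
    have h2 : ∫ ω, |R ω| ∂μ ≤ ∫ ω, (S K ω)^4/(4*m*Z^3*(K:ℝ)^4) ∂μ :=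
      integral_mono_ae IntR.abs IntB hRbound
    have h3 : ∫ ω, (S K ω)^4/(4*m*Z^3*(K:ℝ)^4) ∂μ
        = ((K:ℝ)*m4 + 3*(K:ℝ)*((K:ℝ)-1)*m2^2)/(4*m*Z^3*(K:ℝ)^4) := by
      rw [integral_div, (hmom K).2.2.2]
    linarith
  rw [hlogsplit, hPint, hvar]
  have hcancel : Real.log Z + ((-(m2/(2*Z^2*(K:ℝ))) + m3/(3*Z^3*(K:ℝ)^2)) + ∫ ω, R ω ∂μ)
      - Real.log Z + m2/(2*(K:ℝ)*Z^2)
      = m3/(3*Z^3*(K:ℝ)^2) + ∫ ω, R ω ∂μ := by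
    ring
  rw [hcancel]
  have hR2 : |∫ ω, R ω ∂μ| ≤ ((m4 + 3*m2^2)/(4*m*Z^3))/(K:ℝ)^2 := by
    refine hRint.trans ?_
    have hEq : ((m4 + 3*m2^2)/(4*m*Z^3))/(K:ℝ)^2
        = ((m4 + 3*m2^2)*(K:ℝ)^2)/(4*m*Z^3*(K:ℝ)^4) := by
      field_simp
    rw [hEq, div_le_div_iff_of_pos_right (by positivity)]
    nlinarith [mul_nonneg hm4nonneg (mul_nonneg (sub_nonneg.mpr hK1) hKpos.le),
      mul_nonneg (sq_nonneg m2) hKpos.le]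
  have habs2 : |m3/(3*Z^3*(K:ℝ)^2)| = (|m3|/(3*Z^3))/(K:ℝ)^2 := by
    rw [abs_div, abs_of_pos (show (0:ℝ) < 3*Z^3*(K:ℝ)^2 by positivity), div_div]
  calc |m3/(3*Z^3*(K:ℝ)^2) + ∫ ω, R ω ∂μ|
      ≤ |m3/(3*Z^3*(K:ℝ)^2)| + |∫ ω, R ω ∂μ| := abs_add_le _ _
    _ ≤ (|m3|/(3*Z^3))/(K:ℝ)^2 + ((m4 + 3*m2^2)/(4*m*Z^3))/(K:ℝ)^2 :=
        add_le_add (le_of_eq habs2) hR2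
    _ = (|m3|/(3*Z^3) + (m4 + 3*m2^2)/(4*m*Z^3))/(K:ℝ)^2 := by rw [← add_div]
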